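/- Assume (J), (F1) and (F2'), suppose c_β ∈ ℝ for every 0 < β ≤ +∞, and for each 0 < β ≤ +∞ let η_β : M_β^{c_∞+1} → M_β^{c_∞+1} satisfy (η1)_β and (η2)_β, with the pair (J_β, η_β) satisfying (PS)_{c_β}. Then for every 0 < β ≤ +∞ every optimal set for J_β at c_β intersects K_β; in particular, K_β is nonempty. -/

import Mathlib

open Filter Topology

/-- Kuratowski limit superior of a sequence of subsets of a metric space. -/
def SeqLimsup {X : Type*} [MetricSpace X] (A : ℕ → Set X) : Set X :=
  {x | ∃ φ : ℕ → ℕ, StrictMono φ ∧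
    ∃ y : ℕ → X, (∀ n, y n ∈ A (φ n)) ∧ Tendsto y atTop (𝓝 x)}


lemma tendsto_coe_sub_one_div (c : ℝ) :
    Tendsto (fun n : ℕ => ((c - 1/(n+1) : ℝ) : EReal)) atTop (𝓝 (c : EReal)) := by
  rw [EReal.tendsto_coe]
  simpa using tendsto_const_nhds.sub (tendsto_one_div_add_atTop_nhds_zero_nat :
    Tendsto (fun n : ℕ => 1 / ((n : ℝ) + 1)) atTop (𝓝 0))

lemma tendsto_coe_add_one_div (c : ℝ) :
    Tendsto (fun n : ℕ => ((c + 1/(n+1) : ℝ) : EReal)) atTop (𝓝 (c : EReal)) := by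
  rw [EReal.tendsto_coe]
  simpa using tendsto_const_nhds.add (tendsto_one_div_add_atTop_nhds_zero_nat :
    Tendsto (fun n : ℕ => 1 / ((n : ℝ) + 1)) atTop (𝓝 0))

lemma auxA {X : Type*} [MetricSpace X] (F : Set (Set X))
    (Jb : X → EReal) (ηb : X → X) (c : ℝ) (b : EReal)
    (hc : (⨅ A ∈ F, ⨆ x ∈ A, Jb x) = (c : EReal))
    (hcb : ((c + 1 : ℝ) : EReal) ≤ b)
    (hF1 : ∀ A ∈ F, IsClosed A)
    (hη1 : ∀ A ∈ F, (∀ x ∈ A, Jb x ≤ b) → ηb '' A ∈ F)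
    (hη2 : ∀ x, Jb x ≤ b → Jb (ηb x) ≤ Jb x)
    (Kb : Set X)
    (hPS : ∀ u : ℕ → X,
      Tendsto (fun n => Jb (u n)) atTop (𝓝 (c : EReal)) →
      Tendsto (fun n => Jb (ηb (u n))) atTop (𝓝 (c : EReal)) →
      ∃ φ : ℕ → ℕ, StrictMono φ ∧ ∃ y ∈ Kb, Tendsto (u ∘ φ) atTop (𝓝 y))
    (A : Set X) (hA : A ∈ F) (hopt : (⨆ x ∈ A, Jb x) = (c : EReal)) :
    (A ∩ Kb).Nonempty := by
  have hcb' : ((c : ℝ) : EReal) ≤ b :=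
    le_trans (EReal.coe_le_coe_iff.mpr (by linarith)) hcb
  have hbdA : ∀ x ∈ A, Jb x ≤ (c : EReal) := by
    intro x hx
    exact hopt ▸ le_iSup₂ (f := fun x (_ : x ∈ A) => Jb x) x hx
  have hbdA' : ∀ x ∈ A, Jb x ≤ b := fun x hx => (hbdA x hx).trans hcb'
  have hB : ηb '' A ∈ F := hη1 A hA hbdA'
  have hsupB : ((c : ℝ) : EReal) ≤ ⨆ x ∈ ηb '' A, Jb x := by
    calc ((c : ℝ) : EReal) = ⨅ A ∈ F, ⨆ x ∈ A, Jb x := hc.symm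
    _ ≤ ⨆ x ∈ ηb '' A, Jb x := iInf₂_le _ hB
  have hex : ∀ n : ℕ, ∃ a, a ∈ A ∧ ((c - 1/(n+1) : ℝ) : EReal) < Jb (ηb a) := by
    intro n
    have hlt : ((c - 1/(n+1) : ℝ) : EReal) < ⨆ x ∈ ηb '' A, Jb x :=
      lt_of_lt_of_le (EReal.coe_lt_coe_iff.mpr (sub_lt_self c (by positivity))) hsupB
    simp only [lt_iSup_iff] at hlt
    obtain ⟨z, hz, hzlt⟩ := hlt
    obtain ⟨a, ha, rfl⟩ := hz
    exact ⟨a, ha, hzlt⟩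
  choose u hu hu2 using hex
  have hub : ∀ n, Jb (ηb (u n)) ≤ Jb (u n) := fun n => hη2 _ (hbdA' _ (hu n))
  have hlow := tendsto_coe_sub_one_div c
  have h1 : Tendsto (fun n => Jb (u n)) atTop (𝓝 (c : EReal)) :=
    tendsto_of_tendsto_of_tendsto_of_le_of_le hlow tendsto_const_nhds
      (fun n => le_of_lt (lt_of_lt_of_le (hu2 n) (hub n))) (fun n => hbdA _ (hu n))
  have h2 : Tendsto (fun n => Jb (ηb (u n))) atTop (𝓝 (c : EReal)) :=
    tendsto_of_tendsto_of_tendsto_of_le_of_le hlow tendsto_const_nhds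
      (fun n => le_of_lt (hu2 n)) (fun n => (hub n).trans (hbdA _ (hu n)))
  obtain ⟨φ, hφ, y, hyK, hty⟩ := hPS u h1 h2
  refine ⟨y, ?_, hyK⟩
  exact (hF1 A hA).mem_of_tendsto hty (Eventually.of_forall fun n => hu (φ n))

lemma auxB {X : Type*} [MetricSpace X] (F : Set (Set X)) (Jb : X → EReal)
    (c : ℝ) (b : EReal)
    (hlsc : LowerSemicontinuous Jb)
    (hc : (⨅ A ∈ F, ⨆ x ∈ A, Jb x) = (c : EReal))
    (hcb : ((c + 1 : ℝ) : EReal) ≤ b)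
    (hF2 : ∀ A : ℕ → Set X, (∀ n, A n ∈ F) → (∀ n, ∀ x ∈ A n, Jb x ≤ b) →
      SeqLimsup A ∈ F) :
    ∃ A ∈ F, (⨆ x ∈ A, Jb x) = (c : EReal) := by
  have hex : ∀ n : ℕ, ∃ A, A ∈ F ∧ (⨆ x ∈ A, Jb x) < ((c + 1/(n+1) : ℝ) : EReal) := by
    intro n
    have hlt : (⨅ A ∈ F, ⨆ x ∈ A, Jb x) < ((c + 1/(n+1) : ℝ) : EReal) := by
      rw [hc]; exact EReal.coe_lt_coe_iff.mpr (lt_add_of_pos_right c (by positivity))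
    simp only [iInf_lt_iff] at hlt
    obtain ⟨B, hB, h⟩ := hlt
    exact ⟨B, hB, h⟩
  choose A hAF hAs using hex
  have hbd : ∀ n, ∀ x ∈ A n, Jb x ≤ b := by
    intro n x hx
    refine le_trans (le_of_lt (lt_of_le_of_lt
      (le_iSup₂ (f := fun x (_ : x ∈ A n) => Jb x) x hx) (hAs n))) ?_
    refine le_trans (EReal.coe_le_coe_iff.mpr ?_) hcb
    have h1 : 1/((n:ℝ)+1) ≤ 1 := by
      rw [div_le_one (by positivity)]; linarith [Nat.cast_nonneg (α := ℝ) n]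
    linarith
  have hL : SeqLimsup A ∈ F := hF2 A hAF hbd
  refine ⟨SeqLimsup A, hL, le_antisymm ?_ ?_⟩
  · refine iSup₂_le ?_
    rintro x ⟨φ, hφ, y, hy, hty⟩
    set l := liminf (fun k => Jb (y k)) atTop with hl
    have hll : l ≤ (c : EReal) := by
      have hle : ∀ k, Jb (y k) ≤ ((c + 1/((φ k : ℝ)+1) : ℝ) : EReal) := by
        intro k
        exact le_of_lt (lt_of_le_of_lt
          (le_iSup₂ (f := fun x (_ : x ∈ A (φ k)) => Jb x) _ (hy k)) (hAs (φ k)))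
      have htc : Tendsto (fun k => ((c + 1/((φ k : ℝ)+1) : ℝ) : EReal)) atTop (𝓝 (c : EReal)) :=
        (tendsto_coe_add_one_div c).comp hφ.tendsto_atTop
      calc l ≤ liminf (fun k => ((c + 1/((φ k : ℝ)+1) : ℝ) : EReal)) atTop :=
            liminf_le_liminf (Eventually.of_forall hle)
        _ = (c : EReal) := htc.liminf_eq
    have hxl : Jb x ≤ l := by
      by_contra h
      push_neg at h
      obtain ⟨m, hm1, hm2⟩ := exists_between h
      have hev : ∀ᶠ k in atTop, m < Jb (y k) := hty.eventually (hlsc x m hm2)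
      have : m ≤ l := le_liminf_of_le (by isBoundedDefault)
        (hev.mono fun k hk => le_of_lt hk)
      exact absurd this (not_le.mpr hm1)
    exact hxl.trans hll
  · calc ((c:ℝ) : EReal) = ⨅ A ∈ F, ⨆ x ∈ A, Jb x := hc.symm
      _ ≤ ⨆ x ∈ SeqLimsup A, Jb x := iInf₂_le _ hL


/-- Assume (J), (F1) and (F2'), suppose the minimax levels `c_β` are real for
every `0 < β ≤ +∞`, and for each `0 < β ≤ +∞` let
`η_β : M_β^{c_∞+1} → M_β^{c_∞+1}` satisfy `(η1)_β` and `(η2)_β`, with the pair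
`(J_β, η_β)` satisfying `(PS)_{c_β}`. Then, for every `0 < β ≤ +∞`, every
optimal set for `J_β` at `c_β` intersects `K_β`; in particular, `K_β` is
nonempty. -/
theorem optimal_sets_meet_critical_sets {X : Type*} [MetricSpace X]
    (F : Set (Set X)) (J : ℝ → X → EReal)
    -- each J_β, β > 0, is lower semicontinuous
    (hlsc : ∀ β : ℝ, 0 < β → LowerSemicontinuous (J β))
    -- assumption (J): monotonicity in β on (0, +∞)
    (hmono : ∀ β₁ β₂ : ℝ, 0 < β₁ → β₁ ≤ β₂ → ∀ x, J β₁ x ≤ J β₂ x)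
    -- the limit functional J_∞
    (Jinf : X → EReal) (hJinf : ∀ x, Jinf x = ⨆ β : ℝ, ⨆ _ : 0 < β, J β x)
    -- the minimax levels c_β, 0 < β < +∞, and c_∞; all of them real
    (cβ : ℝ → EReal) (hcβ : ∀ β : ℝ, cβ β = ⨅ A ∈ F, ⨆ x ∈ A, J β x)
    (cinf : ℝ) (hcinf : (⨅ A ∈ F, ⨆ x ∈ A, Jinf x) = (cinf : EReal))
    (hcreal : ∀ β : ℝ, 0 < β → ∃ r : ℝ, cβ β = (r : EReal))
    -- assumption (F1)
    (hF1 : ∀ A ∈ F, IsClosed A)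
    -- assumption (F2')
    (hF2' : ∀ A : ℕ → Set X, (∀ n, A n ∈ F) →
      (∃ β : ℝ, 0 < β ∧ ∀ n, ∀ x ∈ A n, J β x ≤ (cinf : EReal) + 1) →
      SeqLimsup A ∈ F)
    -- the deformations η_β, 0 < β < +∞, mapping M_β^{c_∞+1} into itself
    (η : ℝ → X → X)
    (hηmap : ∀ β : ℝ, 0 < β → ∀ x, J β x ≤ (cinf : EReal) + 1 →
      J β (η β x) ≤ (cinf : EReal) + 1)
    -- (η1)_β
    (hη1 : ∀ β : ℝ, 0 < β → ∀ A ∈ F, (∀ x ∈ A, J β x ≤ (cinf : EReal) + 1) →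
      (η β) '' A ∈ F)
    -- (η2)_β
    (hη2 : ∀ β : ℝ, 0 < β → ∀ x, J β x ≤ (cinf : EReal) + 1 →
      J β (η β x) ≤ J β x)
    -- the deformation η_∞, mapping M_∞^{c_∞+1} into itself
    (ηinf : X → X)
    (hηinfmap : ∀ x, Jinf x ≤ (cinf : EReal) + 1 →
      Jinf (ηinf x) ≤ (cinf : EReal) + 1)
    -- (η1)_∞
    (hη1inf : ∀ A ∈ F, (∀ x ∈ A, Jinf x ≤ (cinf : EReal) + 1) → ηinf '' A ∈ F)
    -- (η2)_∞
    (hη2inf : ∀ x, Jinf x ≤ (cinf : EReal) + 1 → Jinf (ηinf x) ≤ Jinf x)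
    -- the critical sets K_β, 0 < β < +∞, and K_∞
    (K : ℝ → Set X)
    (hKdef : ∀ β : ℝ, K β = {x | J β x = cβ β ∧ J β (η β x) = cβ β})
    (Kinf : Set X)
    (hKinfdef : Kinf = {x | Jinf x = (cinf : EReal) ∧ Jinf (ηinf x) = (cinf : EReal)})
    -- (PS)_{c_β} for 0 < β < +∞
    (hPS : ∀ β : ℝ, 0 < β → ∀ u : ℕ → X,
      Tendsto (fun n => J β (u n)) atTop (𝓝 (cβ β)) →
      Tendsto (fun n => J β (η β (u n))) atTop (𝓝 (cβ β)) →
      ∃ φ : ℕ → ℕ, StrictMono φ ∧ ∃ y ∈ K β, Tendsto (u ∘ φ) atTop (𝓝 y))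
    -- (PS)_{c_∞}
    (hPSinf : ∀ u : ℕ → X,
      Tendsto (fun n => Jinf (u n)) atTop (𝓝 (cinf : EReal)) →
      Tendsto (fun n => Jinf (ηinf (u n))) atTop (𝓝 (cinf : EReal)) →
      ∃ φ : ℕ → ℕ, StrictMono φ ∧ ∃ y ∈ Kinf, Tendsto (u ∘ φ) atTop (𝓝 y)) :
    (∀ β : ℝ, 0 < β →
      (∀ A ∈ F, (⨆ x ∈ A, J β x) = cβ β → (A ∩ K β).Nonempty) ∧ (K β).Nonempty) ∧
    (∀ A ∈ F, (⨆ x ∈ A, Jinf x) = (cinf : EReal) → (A ∩ Kinf).Nonempty) ∧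
    Kinf.Nonempty := by
  have hJle : ∀ β : ℝ, 0 < β → ∀ x, J β x ≤ Jinf x := by
    intro β hβ x
    rw [hJinf x]
    exact le_iSup₂ (f := fun β' (_ : 0 < β') => J β' x) β hβ
  have hlscinf : LowerSemicontinuous Jinf := by
    have h := lowerSemicontinuous_biSup (p := fun β : ℝ => 0 < β)
      (f := fun β (_ : 0 < β) => J β) (fun β hβ => hlsc β hβ)
    have he : Jinf = fun x => ⨆ (β : ℝ) (_ : 0 < β), J β x := funext hJinf
    rw [he]; exact h
  have hcle : ∀ β : ℝ, 0 < β → cβ β ≤ (cinf : EReal) := by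
    intro β hβ
    rw [hcβ β, ← hcinf]
    exact iInf_mono fun A => iInf_mono fun _ => iSup_mono fun x =>
      iSup_mono fun _ => hJle β hβ x
  have hcoe : ((cinf : ℝ) : EReal) + 1 = ((cinf + 1 : ℝ) : EReal) := by norm_cast
  refine ⟨?_, ?_, ?_⟩
  · intro β hβ
    obtain ⟨r, hr⟩ := hcreal β hβ
    have hrc : r ≤ cinf := by
      have h := hcle β hβ; rw [hr] at h; exact EReal.coe_le_coe_iff.mp h
    have hc : (⨅ A ∈ F, ⨆ x ∈ A, J β x) = (r : EReal) := by rw [← hcβ β]; exact hr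
    have hcb : ((r + 1 : ℝ) : EReal) ≤ (cinf : EReal) + 1 := by
      rw [hcoe]; exact EReal.coe_le_coe_iff.mpr (by linarith)
    have hPS' : ∀ u : ℕ → X,
        Tendsto (fun n => J β (u n)) atTop (𝓝 (r : EReal)) →
        Tendsto (fun n => J β (η β (u n))) atTop (𝓝 (r : EReal)) →
        ∃ φ : ℕ → ℕ, StrictMono φ ∧ ∃ y ∈ K β, Tendsto (u ∘ φ) atTop (𝓝 y) := by
      intro u h1 h2
      exact hPS β hβ u (by rw [hr]; exact h1) (by rw [hr]; exact h2)
    have hmain := fun A hA hopt => auxA F (J β) (η β) r ((cinf : EReal) + 1)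
      hc hcb hF1 (hη1 β hβ) (hη2 β hβ) (K β) hPS' A hA hopt
    constructor
    · intro A hA hopt
      exact hmain A hA (by rw [hopt, hr])
    · obtain ⟨A, hA, hopt⟩ := auxB F (J β) r ((cinf : EReal) + 1)
        (hlsc β hβ) hc hcb (fun A hAF hbd => hF2' A hAF ⟨β, hβ, hbd⟩)
      obtain ⟨y, _, hyK⟩ := hmain A hA hopt
      exact ⟨y, hyK⟩
  · intro A hA hopt
    exact auxA F Jinf ηinf cinf ((cinf : EReal) + 1) hcinf hcoe.ge hF1 hη1inf hη2inf
      Kinf hPSinf A hA hopt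
  · obtain ⟨A, hA, hopt⟩ := auxB F Jinf cinf ((cinf : EReal) + 1) hlscinf hcinf hcoe.ge
      (fun A hAF hbd => hF2' A hAF ⟨1, one_pos,
        fun n x hx => (hJle 1 one_pos x).trans (hbd n x hx)⟩)
    obtain ⟨y, _, hyK⟩ := auxA F Jinf ηinf cinf ((cinf : EReal) + 1) hcinf hcoe.ge hF1
      hη1inf hη2inf Kinf hPSinf A hA hopt
    exact ⟨y, hyK⟩
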